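/- (Stationarity formula for positive coordinates of the minimizer.) Fix an integer K ≥ 1, real numbers a₁, …, a_K > 0 and t ≠ 0, and on the probability simplex Δ = {b ∈ ℝ^K : b_k ≥ 0 for all k, ∑_k b_k = 1} define R(b) := (1/K)·∑_{k=1}^K a_k / √(t²·b_k + 1). Let A := max_k a_k, M_a := {m : a_m = A}, let b* be a minimizer of R over Δ, and let B denote the common value b*_m for m ∈ M_a. Then for every k with b*_k > 0, one has a_k / (t²·b*_k + 1)^{3/2} = A / (t²·B + 1)^{3/2}; equivalently, b*_k = (1/t²)·( (a_k/A)^{2/3}·(t²·B + 1) − 1 ). -/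

import Mathlib

set_option maxHeartbeats 1000000

private lemma deriv_aux (c u' : ℝ) (L : ℝ → ℝ) (x₀ : ℝ) (hL : HasDerivAt L u' x₀)
    (hpos : 0 < L x₀) :
    HasDerivAt (fun x => c / Real.sqrt (L x)) (-(c * u') / (2 * Real.sqrt (L x₀) * L x₀)) x₀ := by
  have hsq : Real.sqrt (L x₀) ≠ 0 := by positivity
  have h2 := (hasDerivAt_const x₀ c).div (hL.sqrt hpos.ne') hsq
  refine h2.congr_deriv ?_
  rw [div_eq_div_iff (by positivity) (by positivity)]
  have : Real.sqrt (L x₀) ^ 2 = L x₀ := Real.sq_sqrt hpos.le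
  field_simp
  rw [this]; ring

private lemma fermat_aux (g : ℝ → ℝ) (g' x₀ lo hi y : ℝ) (hx : x₀ ∈ Set.Icc lo hi)
    (hmin : IsMinOn g (Set.Icc lo hi) x₀) (hg : HasDerivAt g g' x₀)
    (hy : x₀ + y ∈ Set.Icc lo hi) : 0 ≤ y * g' := by
  have hseg : segment ℝ x₀ (x₀ + y) ⊆ Set.Icc lo hi :=
    (convex_Icc lo hi).segment_subset hx hy
  have hmem : y ∈ posTangentConeAt (Set.Icc lo hi) x₀ :=
    mem_posTangentConeAt_of_segment_subset hseg
  have hloc : IsLocalMinOn g (Set.Icc lo hi) x₀ :=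
    hmin.filter_mono (Filter.le_principal_iff.mpr self_mem_nhdsWithin)
  have := hloc.hasFDerivWithinAt_nonneg hg.hasFDerivAt.hasFDerivWithinAt hmem
  simpa [smul_eq_mul] using this

/-- stationarity formula for positive coordinates of the minimizer.  Let `b*`
minimize `R(b) = (1/K)·∑ₖ aₖ/√(t²bₖ+1)` over the probability simplex, and let `B` be the common
value of `b*` on the set of indices where `a` attains its maximum `A`.  Then for every `k` with
`b*ₖ > 0`, `aₖ/(t²b*ₖ+1)^{3/2} = A/(t²B+1)^{3/2}`, equivalently
`b*ₖ = (1/t²)·((aₖ/A)^{2/3}·(t²B+1) − 1)`. -/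
theorem stmt_12 {K : ℕ} (hK : 0 < K) (a : Fin K → ℝ) (ha : ∀ k, 0 < a k)
    (t : ℝ) (ht : t ≠ 0)
    (R : (Fin K → ℝ) → ℝ)
    (hR : ∀ b, R b = (1 / K : ℝ) * ∑ k, a k / Real.sqrt (t ^ 2 * b k + 1))
    (A : ℝ) (hub : ∀ k, a k ≤ A) (hex : ∃ k, a k = A)
    (bstar : Fin K → ℝ)
    (hmem : (∀ k, 0 ≤ bstar k) ∧ ∑ k, bstar k = 1)
    (hmin : ∀ b : Fin K → ℝ, (∀ k, 0 ≤ b k) → (∑ k, b k = 1) → R bstar ≤ R b)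
    (B : ℝ) (hB : ∀ m, a m = A → bstar m = B) :
    ∀ k : Fin K, 0 < bstar k →
      a k / (t ^ 2 * bstar k + 1) ^ ((3 : ℝ) / 2) = A / (t ^ 2 * B + 1) ^ ((3 : ℝ) / 2) ∧
      bstar k = (1 / t ^ 2) * ((a k / A) ^ ((2 : ℝ) / 3) * (t ^ 2 * B + 1) - 1) := by
  obtain ⟨hpos, hsum1⟩ := hmem
  obtain ⟨m, hm⟩ := hex
  have hA : 0 < A := lt_of_lt_of_le (ha m) (hub m)
  have ht2 : 0 < t ^ 2 := by positivity
  have hBm : bstar m = B := hB m hm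
  have hB0 : 0 ≤ B := hBm ▸ hpos m
  have hv : 0 < t ^ 2 * B + 1 := by nlinarith
  intro k hk
  by_cases hak : a k = A
  · have hbk : bstar k = B := hB k hak
    refine ⟨by rw [hak, hbk], ?_⟩
    rw [hbk, hak, div_self hA.ne', Real.one_rpow]
    field_simp
    ring
  -- main case : a k < A, so k ≠ m
  have hkm : k ≠ m := fun h => hak (h ▸ hm)
  have hakA : a k < A := lt_of_le_of_ne (hub k) hak
  set s : ℝ := bstar k + B with hs
  have hsk : s - bstar k = B := by simp [hs]
  have hks : bstar k ≤ s := by simp [hs, hB0]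
  have hxmem : bstar k ∈ Set.Icc (0:ℝ) s := ⟨hk.le, hks⟩
  -- the perturbed point
  set bx : ℝ → Fin K → ℝ :=
    fun x => Function.update (Function.update bstar m (s - x)) k x with hbx
  have hbxk : ∀ x, bx x k = x := by
    intro x; simp [hbx]
  have hbxm : ∀ x, bx x m = s - x := by
    intro x
    simp [hbx, Function.update_of_ne hkm.symm]
  have hbxo : ∀ x, ∀ j, j ≠ k → j ≠ m → bx x j = bstar j := by
    intro x j hjk hjm
    simp [hbx, Function.update_of_ne hjk, Function.update_of_ne hjm]
  -- splitting sums at k and m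
  have split : ∀ f : Fin K → ℝ,
      ∑ j, f j = f k + f m + ∑ j ∈ (Finset.univ \ {k}) \ {m}, f j := by
    intro f
    rw [Finset.sum_eq_add_sum_sdiff_singleton_of_mem (Finset.mem_univ k) f,
      Finset.sum_eq_add_sum_sdiff_singleton_of_mem (i := m) (by simp [hkm.symm]) f]
    ring
  have hrest : ∀ x, ∑ j ∈ (Finset.univ \ {k}) \ {m}, a j / Real.sqrt (t ^ 2 * bx x j + 1)
      = ∑ j ∈ (Finset.univ \ {k}) \ {m}, a j / Real.sqrt (t ^ 2 * bstar j + 1) := by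
    intro x
    refine Finset.sum_congr rfl fun j hj => ?_
    simp only [Finset.mem_sdiff, Finset.mem_singleton] at hj
    rw [hbxo x j hj.1.2 hj.2]
  have hsx : ∀ x, ∑ j, bx x j = 1 := by
    intro x
    have h1 := split (bx x)
    have h2 := split bstar
    have hrest2 : ∑ j ∈ (Finset.univ \ {k}) \ {m}, bx x j
        = ∑ j ∈ (Finset.univ \ {k}) \ {m}, bstar j := by
      refine Finset.sum_congr rfl fun j hj => ?_
      simp only [Finset.mem_sdiff, Finset.mem_singleton] at hj
      exact hbxo x j hj.1.2 hj.2
    rw [h1, hbxk, hbxm, hrest2]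
    rw [h2, hBm] at hsum1
    linarith
  -- the one-dimensional restriction
  set g : ℝ → ℝ :=
    fun x => a k / Real.sqrt (t ^ 2 * x + 1) + A / Real.sqrt (t ^ 2 * (s - x) + 1) with hg
  have hgmin : IsMinOn g (Set.Icc 0 s) (bstar k) := by
    intro x hx
    simp only [Set.mem_Icc] at hx
    have hnn : ∀ j, 0 ≤ bx x j := by
      intro j
      by_cases hjk : j = k
      · rw [hjk, hbxk]; exact hx.1
      by_cases hjm : j = m
      · rw [hjm, hbxm]; linarith [hx.2]
      · rw [hbxo x j hjk hjm]; exact hpos j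
    have hle := hmin (bx x) hnn (hsx x)
    rw [hR, hR, split (fun j => a j / Real.sqrt (t ^ 2 * bstar j + 1)),
      split (fun j => a j / Real.sqrt (t ^ 2 * bx x j + 1))] at hle
    simp only [hbxk, hbxm, hrest x] at hle
    have hKpos : (0:ℝ) < 1 / K := by positivity
    have hle2 := le_of_mul_le_mul_left hle hKpos
    have hg1 : g (bstar k) = a k / Real.sqrt (t ^ 2 * bstar k + 1)
        + a m / Real.sqrt (t ^ 2 * bstar m + 1) := by
      rw [hg]; simp only []
      rw [hsk, hBm, hm]
    have hg2 : g x = a k / Real.sqrt (t ^ 2 * x + 1)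
        + a m / Real.sqrt (t ^ 2 * (s - x) + 1) := by
      rw [hg]; simp only []
      rw [hm]
    simp only [Set.mem_setOf_eq]
    rw [hg1, hg2]
    linarith
  -- derivative of g at bstar k
  have hu : (0:ℝ) < t ^ 2 * bstar k + 1 := by nlinarith
  have hu1 : (1:ℝ) < t ^ 2 * bstar k + 1 := by nlinarith
  set u : ℝ := t ^ 2 * bstar k + 1 with hudef
  set v : ℝ := t ^ 2 * B + 1 with hvdef
  have hL1 : HasDerivAt (fun x : ℝ => t ^ 2 * x + 1) (t ^ 2) (bstar k) := by
    simpa using ((hasDerivAt_id (bstar k)).const_mul (t ^ 2)).add_const 1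
  have hL2 : HasDerivAt (fun x : ℝ => t ^ 2 * (s - x) + 1) (-(t ^ 2)) (bstar k) := by
    have := (((hasDerivAt_id (bstar k)).const_sub s).const_mul (t ^ 2)).add_const 1
    simpa using this
  have hd1 := deriv_aux (a k) (t ^ 2) _ (bstar k) hL1 hu
  have hd2 := deriv_aux A (-(t ^ 2)) _ (bstar k) hL2 (by simp only [hsk]; exact hv)
  simp only [hsk] at hd2
  set D1 : ℝ := a k * t ^ 2 / (2 * Real.sqrt u * u) with hD1
  set D2 : ℝ := A * t ^ 2 / (2 * Real.sqrt v * v) with hD2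
  have hgd : HasDerivAt g (-D1 + D2) (bstar k) := by
    have := hd1.add hd2
    refine this.congr_deriv ?_
    rw [hD1, hD2, hudef, hvdef]
    ring
  have hsqu : 0 < Real.sqrt u := Real.sqrt_pos.mpr hu
  have hsqv : 0 < Real.sqrt v := Real.sqrt_pos.mpr hv
  -- one-sided condition : D2 ≤ D1
  have hstep1 : 0 ≤ (-(bstar k)) * (-D1 + D2) := by
    have he : bstar k + -(bstar k) = 0 := by ring
    refine fermat_aux g _ (bstar k) 0 s (-(bstar k)) hxmem hgmin hgd ?_
    rw [he]
    exact ⟨le_refl 0, by linarith⟩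
  have hD2D1 : D2 ≤ D1 := by nlinarith [hk]
  -- B must be positive
  have hBpos : 0 < B := by
    rcases lt_or_eq_of_le hB0 with h | h
    · exact h
    · exfalso
      have hv1 : v = 1 := by rw [hvdef, ← h]; ring
      have hsv1 : Real.sqrt v = 1 := by rw [hv1]; exact Real.sqrt_one
      have hsu1 : 1 < Real.sqrt u := by
        have := Real.sqrt_lt_sqrt (by norm_num) hu1
        simpa using this
      have hD2' : D2 = A * t ^ 2 / 2 := by rw [hD2, hsv1, hv1]; ring_nf
      have hD1lt : D1 < a k * t ^ 2 / 2 := by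
        have hq : 1 < Real.sqrt u * u := by nlinarith
        rw [hD1, div_lt_div_iff₀ (by positivity) (by norm_num)]
        nlinarith [mul_pos (ha k) ht2, hq]
      have : a k * t ^ 2 / 2 < A * t ^ 2 / 2 := by nlinarith
      rw [hD2'] at hD2D1
      linarith
  -- other direction : D1 ≤ D2
  have hstep2 : 0 ≤ B * (-D1 + D2) := by
    refine fermat_aux g _ (bstar k) 0 s B hxmem hgmin hgd ?_
    exact ⟨by linarith, le_of_eq hs.symm⟩
  have hD1D2 : D1 = D2 := by nlinarith
  -- translate to the rpow statement
  have hcross : a k * (Real.sqrt v * v) = A * (Real.sqrt u * u) := by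
    rw [hD1, hD2] at hD1D2
    rw [div_eq_div_iff (by positivity) (by positivity)] at hD1D2
    nlinarith [hD1D2]
  have hup : u ^ ((3:ℝ)/2) = Real.sqrt u * u := by
    rw [show (3:ℝ)/2 = 1/2 + 1 by norm_num, Real.rpow_add hu, Real.rpow_one,
      ← Real.sqrt_eq_rpow]
  have hvp : v ^ ((3:ℝ)/2) = Real.sqrt v * v := by
    rw [show (3:ℝ)/2 = 1/2 + 1 by norm_num, Real.rpow_add hv, Real.rpow_one,
      ← Real.sqrt_eq_rpow]
  have hmain : a k / u ^ ((3:ℝ)/2) = A / v ^ ((3:ℝ)/2) := by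
    rw [hup, hvp, div_eq_div_iff (by positivity) (by positivity)]
    linarith [hcross]
  refine ⟨hmain, ?_⟩
  -- second formula
  have hupos : (0:ℝ) < u ^ ((3:ℝ)/2) := Real.rpow_pos_of_pos hu _
  have hvpos : (0:ℝ) < v ^ ((3:ℝ)/2) := Real.rpow_pos_of_pos hv _
  have h32 : u ^ ((3:ℝ)/2) = (a k / A) * v ^ ((3:ℝ)/2) := by
    rw [div_eq_div_iff hupos.ne' hvpos.ne'] at hmain
    field_simp
    linarith [hmain]
  have hcollapse : ∀ w : ℝ, 0 < w → (w ^ ((3:ℝ)/2)) ^ ((2:ℝ)/3) = w := by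
    intro w hw
    rw [← Real.rpow_mul hw.le]
    norm_num
  have hfin : u = (a k / A) ^ ((2:ℝ)/3) * v := by
    calc u = (u ^ ((3:ℝ)/2)) ^ ((2:ℝ)/3) := (hcollapse u hu).symm
    _ = ((a k / A) * v ^ ((3:ℝ)/2)) ^ ((2:ℝ)/3) := by rw [h32]
    _ = (a k / A) ^ ((2:ℝ)/3) * (v ^ ((3:ℝ)/2)) ^ ((2:ℝ)/3) := by
        rw [Real.mul_rpow (div_nonneg (ha k).le hA.le) hvpos.le]
    _ = (a k / A) ^ ((2:ℝ)/3) * v := by rw [hcollapse v hv]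
  rw [hudef] at hfin
  rw [← hfin]
  field_simp
  ring
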